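/- arXiv:2211.12755 — 5 statements merged into one kernel-verified Lean document; each statement's English description precedes it below -/
import Mathlib

section
/- For every z ∈ ℝ, every φ ∈ C([0,t];ℝ) and every 0 < s ≤ t, one has 1/A_s(T_z(φ)) = 1/A_s(φ) + (e^z − 1)/A_t(φ); in particular A_t(T_z(φ)) = e^{−z} A_t(φ). -/
open MeasureTheory ProbabilityTheory Set

/-- `A_s(φ) = ∫_0^s e^{2 φ_u} du`. -/
noncomputable def pA (φ : ℝ → ℝ) (s : ℝ) : ℝ := ∫ u in (0:ℝ)..s, Real.exp (2 * φ u)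

/-- `Z_s(φ) = e^{-φ_s} A_s(φ)`. -/
noncomputable def pZ (φ : ℝ → ℝ) (s : ℝ) : ℝ := Real.exp (-(φ s)) * pA φ s

/-- The anticipative transformation `T_z` on paths over `[0,t]`:
`T_z(φ)(s) = φ_s - log(1 + (A_s(φ)/A_t(φ)) (e^z - 1))`. -/
noncomputable def pT (t z : ℝ) (φ : ℝ → ℝ) (s : ℝ) : ℝ :=
  φ s - Real.log (1 + (pA φ s / pA φ t) * (Real.exp z - 1))

/-- For every `z ∈ ℝ`, `φ ∈ C([0,t];ℝ)` and `0 < s ≤ t`,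
`1/A_s(T_z(φ)) = 1/A_s(φ) + (e^z - 1)/A_t(φ)`; in particular
`A_t(T_z(φ)) = e^{-z} A_t(φ)`. -/
theorem pA_pT_reciprocal (t : ℝ) (ht : 0 < t) (z : ℝ) (φ : ℝ → ℝ)
    (hφ : ContinuousOn φ (Icc 0 t)) :
    (∀ s : ℝ, 0 < s → s ≤ t →
      1 / pA (pT t z φ) s = 1 / pA φ s + (Real.exp z - 1) / pA φ t) ∧
    pA (pT t z φ) t = Real.exp (-z) * pA φ t := by
  set f : ℝ → ℝ := fun u => Real.exp (2 * φ u) with hf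
  have hfc : ContinuousOn f (Icc 0 t) :=
    Real.continuous_exp.comp_continuousOn (continuousOn_const.mul hφ)
  have hint : ∀ a b : ℝ, 0 ≤ a → a ≤ b → b ≤ t → IntervalIntegrable f volume a b := by
    intro a b ha hab hbt
    apply ContinuousOn.intervalIntegrable
    rw [uIcc_of_le hab]
    exact hfc.mono (Icc_subset_Icc ha hbt)
  set g : ℝ → ℝ := pA φ with hg
  have hg_nonneg : ∀ u : ℝ, u ∈ Icc 0 t → 0 ≤ g u := by
    intro u hu
    exact intervalIntegral.integral_nonneg hu.1 (fun x _ => (Real.exp_pos _).le)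
  have hg_le : ∀ u : ℝ, u ∈ Icc 0 t → g u ≤ g t := by
    intro u hu
    have hadd := intervalIntegral.integral_add_adjacent_intervals
      (hint 0 u le_rfl hu.1 hu.2) (hint u t hu.1 hu.2 le_rfl)
    have hnn : 0 ≤ ∫ x in u..t, f x :=
      intervalIntegral.integral_nonneg hu.2 (fun x _ => (Real.exp_pos _).le)
    simp only [hg, pA]
    linarith [hadd]
  have hg_pos : ∀ s : ℝ, 0 < s → s ≤ t → 0 < g s := by
    intro s hs hst
    exact intervalIntegral.intervalIntegral_pos_of_pos_on
      (hint 0 s le_rfl hs.le hst) (fun x _ => Real.exp_pos _) hs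
  have hgt_pos : 0 < g t := hg_pos t ht le_rfl
  have hgt_ne : g t ≠ 0 := ne_of_gt hgt_pos
  set c : ℝ := (Real.exp z - 1) / g t with hc
  have hD : ∀ u : ℝ, u ∈ Icc 0 t → 0 < 1 + c * g u := by
    intro u hu
    have h0 := hg_nonneg u hu
    have h1 := hg_le u hu
    have hez := Real.exp_pos z
    have heq : 1 + c * g u = (g t + (Real.exp z - 1) * g u) / g t := by
      field_simp [hc]
      rw [hc, add_mul, div_mul_eq_mul_div, div_mul_cancel₀ _ hgt_ne]; ring
    rw [heq]
    apply div_pos _ hgt_pos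
    rcases eq_or_lt_of_le h0 with h | h
    · nlinarith
    · nlinarith [mul_pos hez h]
  -- key formula
  have key : ∀ s : ℝ, 0 < s → s ≤ t → pA (pT t z φ) s = g s / (1 + c * g s) := by
    intro s hs hst
    have hsub : Icc (0:ℝ) s ⊆ Icc 0 t := Icc_subset_Icc le_rfl hst
    -- continuity of g on [0,s]
    have hgcont : ContinuousOn g (Icc 0 s) := by
      have : Icc (0:ℝ) s = uIcc 0 s := (uIcc_of_le hs.le).symm
      rw [hg, this]
      unfold pA
      exact intervalIntegral.continuousOn_primitive_interval
        (by rw [← this]; exact (hfc.mono hsub).integrableOn_Icc.mono_set (by rw [this]))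
    have hDne : ∀ u ∈ Icc (0:ℝ) s, 1 + c * g u ≠ 0 :=
      fun u hu => ne_of_gt (hD u (hsub hu))
    -- integrand equality
    have hEq : EqOn (fun u => Real.exp (2 * pT t z φ u))
        (fun u => f u / (1 + c * g u) ^ 2) (uIcc 0 s) := by
      intro u hu
      rw [uIcc_of_le hs.le] at hu
      have hDu : 0 < 1 + c * g u := hD u (hsub hu)
      have hrw : (pA φ u / pA φ t) * (Real.exp z - 1) = c * g u := by
        rw [hc, hg]; ring
      simp only [pT, hrw]
      rw [mul_sub, Real.exp_sub, two_mul (Real.log _), Real.exp_add,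
        Real.exp_log hDu, sq]
    have step1 : pA (pT t z φ) s = ∫ u in (0:ℝ)..s, f u / (1 + c * g u) ^ 2 :=
      intervalIntegral.integral_congr hEq
    -- FTC
    set F : ℝ → ℝ := fun u => g u / (1 + c * g u) with hF
    have hFcont : ContinuousOn F (Icc 0 s) :=
      hgcont.div (continuousOn_const.add (continuousOn_const.mul hgcont)) hDne
    have hderiv : ∀ x ∈ Ioo (0:ℝ) s, HasDerivWithinAt F (f x / (1 + c * g x) ^ 2) (Ioi x) x := by
      intro x hx
      have hxt : x ∈ Ioo (0:ℝ) t := ⟨hx.1, lt_of_lt_of_le hx.2 hst⟩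
      have hmem : Icc (0:ℝ) t ∈ nhds x :=
        Icc_mem_nhds hxt.1 hxt.2
      have hcx : ContinuousAt f x := hfc.continuousAt hmem
      have hmeas : StronglyMeasurableAtFilter f (nhds x) volume := by
        refine ContinuousOn.stronglyMeasurableAtFilter isOpen_Ioo
          (hfc.mono (Ioo_subset_Icc_self)) x hxt
      have hgx : HasDerivAt g (f x) x :=
        intervalIntegral.integral_hasDerivAt_right
          (hint 0 x le_rfl hxt.1.le hxt.2.le) hmeas hcx
      have hDx : HasDerivAt (fun u => 1 + c * g u) (c * f x) x :=
        ((hgx.const_mul c).const_add 1)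
      have hne : 1 + c * g x ≠ 0 := ne_of_gt (hD x ⟨hxt.1.le, hxt.2.le⟩)
      have hdd := hgx.div hDx hne
      have heq : f x * (1 + c * g x) - g x * (c * f x) = f x := by ring
      rw [heq] at hdd
      exact hdd.hasDerivWithinAt
    have hFint : IntervalIntegrable (fun u => f u / (1 + c * g u) ^ 2) volume 0 s := by
      apply ContinuousOn.intervalIntegrable
      rw [uIcc_of_le hs.le]
      exact (hfc.mono hsub).div
        ((continuousOn_const.add (continuousOn_const.mul hgcont)).pow 2)
        (fun u hu => pow_ne_zero 2 (hDne u hu))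
    have hFTC := intervalIntegral.integral_eq_sub_of_hasDeriv_right_of_le hs.le
      hFcont hderiv hFint
    have hF0 : F 0 = 0 := by
      simp [hF, hg, pA]
    rw [step1, hFTC, hF0, sub_zero]
  constructor
  · intro s hs hst
    have hgs := hg_pos s hs hst
    rw [key s hs hst, one_div_div, hc]
    rw [div_add_div _ _ (ne_of_gt hgs) hgt_ne]
    rw [div_eq_div_iff (ne_of_gt hgs) (mul_ne_zero (ne_of_gt hgs) hgt_ne)]
    field_simp
  · rw [key t ht le_rfl]
    have : c * g t = Real.exp z - 1 := by
      rw [hc]; field_simp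
    rw [this, Real.exp_neg]
    have : 1 + (Real.exp z - 1) = Real.exp z := by ring
    rw [this, div_eq_inv_mul]
end

section
/- For every z ∈ ℝ and every φ ∈ C([0,t];ℝ), one has Z_s(T_z(φ)) = Z_s(φ) for all 0 ≤ s ≤ t; that is, Z ∘ T_z = Z. -/
open MeasureTheory ProbabilityTheory Set

lemma pA_zero (φ : ℝ → ℝ) : pA φ 0 = 0 := intervalIntegral.integral_same

lemma exp_two_mul' (x : ℝ) : Real.exp (2 * x) = (Real.exp x) ^ 2 := by
  rw [two_mul, Real.exp_add, sq]

lemma key_aux (t : ℝ) (ht : 0 < t) (z : ℝ) (ψ : ℝ → ℝ) (hψ : Continuous ψ) :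
    ∀ s ∈ Icc (0:ℝ) t, pZ (pT t z ψ) s = pZ ψ s := by
  have hc : Continuous fun v => Real.exp (2 * ψ v) := by continuity
  have hA : ∀ u, HasDerivAt (pA ψ) (Real.exp (2 * ψ u)) u := fun u =>
    intervalIntegral.integral_hasDerivAt_right (hc.intervalIntegrable _ _)
      (hc.stronglyMeasurableAtFilter _ _) hc.continuousAt
  have hmono : StrictMono (pA ψ) := by
    apply strictMono_of_deriv_pos
    intro u; rw [(hA u).deriv]; positivity
  have hAcont : Continuous (pA ψ) := by
    rw [continuous_iff_continuousAt]; exact fun u => (hA u).continuousAt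
  have hAt : 0 < pA ψ t := by
    have := hmono ht; rwa [pA_zero] at this
  -- positivity of the denominator
  have hD : ∀ s ∈ Icc (0:ℝ) t, 0 < 1 + (pA ψ s / pA ψ t) * (Real.exp z - 1) := by
    intro s hs
    have h0 : 0 ≤ pA ψ s := by
      rcases eq_or_lt_of_le hs.1 with h | h
      · rw [← h, pA_zero]
      · have := hmono h; rw [pA_zero] at this; exact this.le
    have h1 : pA ψ s ≤ pA ψ t := hmono.monotone hs.2
    have hr0 : 0 ≤ pA ψ s / pA ψ t := div_nonneg h0 hAt.le
    have hr1 : pA ψ s / pA ψ t ≤ 1 := (div_le_one hAt).mpr h1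
    rcases le_or_gt 1 (Real.exp z) with h | h
    · nlinarith
    · nlinarith [Real.exp_pos z]
  set c : ℝ := (Real.exp z - 1) / pA ψ t with hc_def
  have hDc : ∀ s, 1 + (pA ψ s / pA ψ t) * (Real.exp z - 1) = 1 + c * pA ψ s := by
    intro s; rw [hc_def]; ring
  have hD' : ∀ s ∈ Icc (0:ℝ) t, 0 < 1 + c * pA ψ s := by
    intro s hs; rw [← hDc]; exact hD s hs
  have hexpT : ∀ s ∈ Icc (0:ℝ) t,
      Real.exp (pT t z ψ s) = Real.exp (ψ s) / (1 + c * pA ψ s) := by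
    intro s hs
    rw [pT, Real.exp_sub, Real.exp_log (hD s hs), hDc]
  -- the antiderivative
  set F : ℝ → ℝ := fun u => pA ψ u / (1 + c * pA ψ u) with hF_def
  have hDF : ∀ u ∈ Icc (0:ℝ) t,
      HasDerivAt F (Real.exp (2 * pT t z ψ u)) u := by
    intro u hu
    have hDu : 0 < 1 + c * pA ψ u := hD' u hu
    have h2 : HasDerivAt (fun v => 1 + c * pA ψ v) (c * Real.exp (2 * ψ u)) u :=
      ((hA u).const_mul c).const_add 1
    have h3 := (hA u).div h2 hDu.ne'
    have heq : Real.exp (2 * pT t z ψ u)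
        = (Real.exp (2 * ψ u) * (1 + c * pA ψ u) - pA ψ u * (c * Real.exp (2 * ψ u)))
          / (1 + c * pA ψ u) ^ 2 := by
      rw [exp_two_mul', hexpT u hu, div_pow, ← exp_two_mul']
      congr 1; ring
    rw [heq]
    exact h3
  -- continuity of the transformed integrand on [0,t]
  have hTcont : ContinuousOn (pT t z ψ) (Icc (0:ℝ) t) := by
    apply (hψ.continuousOn.sub ?_)
    apply ContinuousOn.log
    · exact (continuousOn_const.add (((hAcont.continuousOn.div_const _).mul
        continuousOn_const)))
    · intro x hx; exact (hD x hx).ne'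
  have hTIcont : ContinuousOn (fun u => Real.exp (2 * pT t z ψ u)) (Icc (0:ℝ) t) :=
    Real.continuous_exp.comp_continuousOn (continuousOn_const.mul hTcont)
  -- FTC on [0,s]
  have hAT : ∀ s ∈ Icc (0:ℝ) t, pA (pT t z ψ) s = pA ψ s / (1 + c * pA ψ s) := by
    intro s hs
    have hsub : uIcc (0:ℝ) s ⊆ Icc (0:ℝ) t := by
      rw [uIcc_of_le hs.1]
      exact Icc_subset_Icc le_rfl hs.2
    have hint : IntervalIntegrable (fun u => Real.exp (2 * pT t z ψ u)) volume 0 s :=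
      (hTIcont.mono hsub).intervalIntegrable
    have := intervalIntegral.integral_eq_sub_of_hasDerivAt
      (fun x hx => hDF x (hsub hx)) hint
    rw [pA, this, hF_def]
    simp [pA_zero]
  -- conclude
  intro s hs
  have hDs := hD' s hs
  rw [pZ, pZ, hAT s hs, Real.exp_neg, Real.exp_neg, hexpT s hs]
  field_simp

/-- For every `z ∈ ℝ` and `φ ∈ C([0,t];ℝ)`, `Z_s(T_z(φ)) = Z_s(φ)` for all `0 ≤ s ≤ t`;
that is, `Z ∘ T_z = Z`. -/
theorem pZ_pT (t : ℝ) (ht : 0 < t) (z : ℝ) (φ : ℝ → ℝ)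
    (hφ : ContinuousOn φ (Icc 0 t)) :
    ∀ s ∈ Icc (0:ℝ) t, pZ (pT t z φ) s = pZ φ s := by
  -- extend φ continuously by clamping
  set p : ℝ → ℝ := fun u => max 0 (min u t) with hp_def
  have hpcont : Continuous p := by
    exact continuous_const.max (continuous_id.min continuous_const)
  have hpmem : ∀ x, p x ∈ Icc (0:ℝ) t := fun x =>
    ⟨le_max_left _ _, max_le ht.le (min_le_right x t)⟩
  set ψ : ℝ → ℝ := φ ∘ p with hψ_def
  have hψ : Continuous ψ := hφ.comp_continuous hpcont hpmem
  have heq : ∀ s ∈ Icc (0:ℝ) t, ψ s = φ s := by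
    intro s hs
    rw [hψ_def]
    simp only [Function.comp_apply, hp_def]
    rw [min_eq_left hs.2, max_eq_right hs.1]
  have hAeq : ∀ s ∈ Icc (0:ℝ) t, pA ψ s = pA φ s := by
    intro s hs
    apply intervalIntegral.integral_congr
    intro u hu
    have hu' : u ∈ Icc (0:ℝ) t := by
      rw [uIcc_of_le hs.1] at hu
      exact Icc_subset_Icc le_rfl hs.2 hu
    simp [heq u hu']
  have hTeq : ∀ s ∈ Icc (0:ℝ) t, pT t z ψ s = pT t z φ s := by
    intro s hs
    rw [pT, pT, heq s hs, hAeq s hs, hAeq t ⟨ht.le, le_rfl⟩]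
  have hATeq : ∀ s ∈ Icc (0:ℝ) t, pA (pT t z ψ) s = pA (pT t z φ) s := by
    intro s hs
    apply intervalIntegral.integral_congr
    intro u hu
    have hu' : u ∈ Icc (0:ℝ) t := by
      rw [uIcc_of_le hs.1] at hu
      exact Icc_subset_Icc le_rfl hs.2 hu
    simp [hTeq u hu']
  intro s hs
  have hkey := key_aux t ht z ψ hψ s hs
  rw [pZ, pZ] at hkey ⊢
  rw [← hTeq s hs, ← hAeq s hs, ← hATeq s hs, ← heq s hs]
  exact hkey
end

section
/- (Semigroup property) For all z, z' ∈ ℝ one has T_z ∘ T_{z'} = T_{z+z'} as maps on C([0,t];ℝ); in particular T_z ∘ T_{−z} = T_0 = Id for every z ∈ ℝ, where Id is the identity map on C([0,t];ℝ). -/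
open MeasureTheory ProbabilityTheory Set

lemma alg_key (a b E E' : ℝ) (hb : b ≠ 0) (hE' : E' ≠ 0) (hD : b + a * (E' - 1) ≠ 0) :
    1 + a / (1 + a / b * (E' - 1)) / (b / E') * (E - 1)
      = (1 + a / b * (E * E' - 1)) / (1 + a / b * (E' - 1)) := by
  have h1 : 1 + a / b * (E' - 1) = (b + a * (E' - 1)) / b := by field_simp
  rw [h1]
  field_simp
  ring

section aux

variable {t : ℝ} {φ : ℝ → ℝ}

lemma aux_contOn (hφ : ContinuousOn φ (Icc 0 t)) :
    ContinuousOn (fun u => Real.exp (2 * φ u)) (Icc 0 t) :=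
  (Real.continuous_exp.comp (continuous_const.mul continuous_id)).comp_continuousOn hφ

lemma aux_intOn (ht : 0 ≤ t) (hφ : ContinuousOn φ (Icc 0 t)) {a b : ℝ}
    (ha : a ∈ Icc 0 t) (hb : b ∈ Icc 0 t) :
    IntervalIntegrable (fun u => Real.exp (2 * φ u)) MeasureTheory.volume a b := by
  exact ((aux_contOn hφ).mono (uIcc_subset_Icc ha hb)).intervalIntegrable

lemma pA_pos (ht : 0 < t) (hφ : ContinuousOn φ (Icc 0 t)) : 0 < pA φ t := by
  apply intervalIntegral.intervalIntegral_pos_of_pos_on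
    (aux_intOn ht.le hφ (left_mem_Icc.2 ht.le) (right_mem_Icc.2 ht.le))
    (fun x _ => Real.exp_pos _) ht

lemma pA_nonneg (ht : 0 < t) (hφ : ContinuousOn φ (Icc 0 t)) {s : ℝ} (hs : s ∈ Icc 0 t) :
    0 ≤ pA φ s :=
  intervalIntegral.integral_nonneg hs.1 (fun u _ => (Real.exp_pos _).le)

lemma pA_le (ht : 0 < t) (hφ : ContinuousOn φ (Icc 0 t)) {s : ℝ} (hs : s ∈ Icc 0 t) :
    pA φ s ≤ pA φ t := by
  have h1 := aux_intOn ht.le hφ (left_mem_Icc.2 ht.le) hs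
  have h2 := aux_intOn ht.le hφ hs (right_mem_Icc.2 ht.le)
  have hsum : pA φ s + (∫ u in s..t, Real.exp (2 * φ u)) = pA φ t :=
    intervalIntegral.integral_add_adjacent_intervals h1 h2
  have : 0 ≤ ∫ u in s..t, Real.exp (2 * φ u) :=
    intervalIntegral.integral_nonneg hs.2 (fun u _ => (Real.exp_pos _).le)
  linarith

lemma pA_t_pos_denom (ht : 0 < t) (hφ : ContinuousOn φ (Icc 0 t)) {s : ℝ}
    (hs : s ∈ Icc 0 t) (w : ℝ) :
    0 < 1 + pA φ s / pA φ t * (Real.exp w - 1) := by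
  have hAt := pA_pos ht hφ
  have h0 := pA_nonneg ht hφ hs
  have h1 := pA_le ht hφ hs
  have hr0 : 0 ≤ pA φ s / pA φ t := div_nonneg h0 hAt.le
  have hr1 : pA φ s / pA φ t ≤ 1 := (div_le_one hAt).2 h1
  have hE := Real.exp_pos w
  nlinarith [mul_nonneg hr0 hE.le, mul_nonneg (sub_nonneg.2 hr1) hE.le]

lemma pA_continuousOn (ht : 0 < t) (hφ : ContinuousOn φ (Icc 0 t)) :
    ContinuousOn (pA φ) (Icc 0 t) := by
  have := intervalIntegral.continuousOn_primitive_interval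
    (a := (0:ℝ)) (b := t) (μ := MeasureTheory.volume)
    (f := fun u => Real.exp (2 * φ u)) ?_
  · rwa [uIcc_of_le ht.le] at this
  · rw [uIcc_of_le ht.le]
    exact (aux_contOn hφ).integrableOn_Icc

/-- Key computation: `A_s(T_{z'} φ) = A_s / (1 + (A_s/A_t)(e^{z'}-1))`. -/
lemma pA_pT (ht : 0 < t) (hφ : ContinuousOn φ (Icc 0 t)) (z' : ℝ) {s : ℝ}
    (hs : s ∈ Icc 0 t) :
    pA (pT t z' φ) s = pA φ s / (1 + pA φ s / pA φ t * (Real.exp z' - 1)) := by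
  have hAt := pA_pos ht hφ
  set c : ℝ := (Real.exp z' - 1) / pA φ t with hc
  have hcA : ∀ u, pA φ u / pA φ t * (Real.exp z' - 1) = c * pA φ u := by
    intro u; rw [hc]; ring
  have hDpos : ∀ u ∈ Icc (0:ℝ) t, 0 < 1 + c * pA φ u := by
    intro u hu; rw [← hcA]; exact pA_t_pos_denom ht hφ hu z'
  have hApos : ContinuousOn (pA φ) (Icc 0 t) := pA_continuousOn ht hφ
  have hint_eq : ∀ u ∈ Icc (0:ℝ) t,
      Real.exp (2 * pT t z' φ u) = Real.exp (2 * φ u) / (1 + c * pA φ u) ^ 2 := by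
    intro u hu
    have hD := hDpos u hu
    rw [pT, hcA, mul_sub, Real.exp_sub]
    congr 1
    rw [show (2:ℝ) * Real.log (1 + c * pA φ u) = Real.log ((1 + c * pA φ u) ^ 2) by
      rw [Real.log_pow]; push_cast; ring]
    exact Real.exp_log (pow_pos hD 2)
  set F : ℝ → ℝ := fun u => pA φ u / (1 + c * pA φ u) with hF
  have hFcont : ContinuousOn F (Icc 0 t) :=
    hApos.div ((continuousOn_const.add (continuousOn_const.mul hApos)))
      (fun u hu => (hDpos u hu).ne')
  have hIccsub : Icc (0:ℝ) s ⊆ Icc 0 t := Icc_subset_Icc le_rfl hs.2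
  have hderiv : ∀ x ∈ Ioo (0:ℝ) s, HasDerivWithinAt F
      (Real.exp (2 * φ x) / (1 + c * pA φ x) ^ 2) (Ioi x) x := by
    intro x hx
    have hxt : x ∈ Ioo (0:ℝ) t := ⟨hx.1, lt_of_lt_of_le hx.2 hs.2⟩
    have hA' : HasDerivAt (pA φ) (Real.exp (2 * φ x)) x := by
      apply intervalIntegral.integral_hasDerivAt_right
        (aux_intOn ht.le hφ (left_mem_Icc.2 ht.le) ⟨hxt.1.le, hxt.2.le⟩)
      · exact (((aux_contOn hφ).mono Ioo_subset_Icc_self).stronglyMeasurableAtFilter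
          isOpen_Ioo) x hxt
      · exact ((aux_contOn hφ) x ⟨hxt.1.le, hxt.2.le⟩).continuousAt
          (Icc_mem_nhds hxt.1 hxt.2)
    have hD : HasDerivAt (fun u => 1 + c * pA φ u) (c * Real.exp (2 * φ x)) x :=
      ((hA'.const_mul c).const_add 1)
    have hDx := hDpos x ⟨hxt.1.le, hxt.2.le⟩
    have hdiv := hA'.div hD hDx.ne'
    have heq : (Real.exp (2 * φ x) * (1 + c * pA φ x) -
        pA φ x * (c * Real.exp (2 * φ x))) / (1 + c * pA φ x) ^ 2
        = Real.exp (2 * φ x) / (1 + c * pA φ x) ^ 2 := by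
      field_simp; ring
    rw [heq] at hdiv
    exact hdiv.hasDerivWithinAt
  have hint : IntervalIntegrable (fun u => Real.exp (2 * φ u) / (1 + c * pA φ u) ^ 2)
      MeasureTheory.volume 0 s := by
    apply ContinuousOn.intervalIntegrable
    rw [uIcc_of_le hs.1]
    exact ((aux_contOn hφ).mono hIccsub).div
      (((continuousOn_const.add (continuousOn_const.mul hApos)).mono hIccsub).pow 2)
      (fun u hu => pow_ne_zero 2 (hDpos u (hIccsub hu)).ne')
  have hFTC : (∫ u in (0:ℝ)..s, Real.exp (2 * φ u) / (1 + c * pA φ u) ^ 2) = F s - F 0 :=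
    intervalIntegral.integral_eq_sub_of_hasDeriv_right_of_le hs.1
      (hFcont.mono hIccsub) hderiv hint
  have hF0 : F 0 = 0 := by
    simp [hF, pA, intervalIntegral.integral_same]
  have hcongr : pA (pT t z' φ) s
      = ∫ u in (0:ℝ)..s, Real.exp (2 * φ u) / (1 + c * pA φ u) ^ 2 := by
    rw [pA]
    apply intervalIntegral.integral_congr
    rw [uIcc_of_le hs.1]
    intro u hu
    exact hint_eq u (hIccsub hu)
  rw [hcongr, hFTC, hF0, sub_zero, hF, hcA]

end aux

/-- Semigroup property: `T_z ∘ T_{z'} = T_{z+z'}` as maps on `C([0,t];ℝ)`; in particular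
`T_z ∘ T_{-z} = T_0 = Id`. -/
theorem pT_comp_pT (t : ℝ) (ht : 0 < t) :
    (∀ z z' : ℝ, ∀ φ : ℝ → ℝ, ContinuousOn φ (Icc 0 t) →
      ∀ s ∈ Icc (0:ℝ) t, pT t z (pT t z' φ) s = pT t (z + z') φ s) ∧
    (∀ z : ℝ, ∀ φ : ℝ → ℝ, ContinuousOn φ (Icc 0 t) →
      ∀ s ∈ Icc (0:ℝ) t, pT t z (pT t (-z) φ) s = φ s) ∧
    (∀ φ : ℝ → ℝ, ContinuousOn φ (Icc 0 t) →
      ∀ s ∈ Icc (0:ℝ) t, pT t 0 φ s = φ s) := by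
  have h3 : ∀ φ : ℝ → ℝ, ContinuousOn φ (Icc 0 t) →
      ∀ s ∈ Icc (0:ℝ) t, pT t 0 φ s = φ s := by
    intro φ hφ s hs
    simp [pT]
  have h1 : ∀ z z' : ℝ, ∀ φ : ℝ → ℝ, ContinuousOn φ (Icc 0 t) →
      ∀ s ∈ Icc (0:ℝ) t, pT t z (pT t z' φ) s = pT t (z + z') φ s := by
    intro z z' φ hφ s hs
    have hAt := pA_pos ht hφ
    have htm : t ∈ Icc (0:ℝ) t := right_mem_Icc.2 ht.le
    have hAs := pA_pT ht hφ z' hs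
    have hAtT := pA_pT ht hφ z' htm
    have hDs := pA_t_pos_denom ht hφ hs z'
    have hDt : 1 + pA φ t / pA φ t * (Real.exp z' - 1) = Real.exp z' := by
      rw [div_self hAt.ne']; ring
    have hN := pA_t_pos_denom ht hφ hs (z + z')
    rw [pT, pT, pT, hAs, hAtT, hDt]
    have hEz' := Real.exp_pos z'
    have hpos1 : pA φ t + pA φ s * (Real.exp z' - 1) ≠ 0 := by
      have h := mul_pos hAt hDs
      have e : pA φ t * (1 + pA φ s / pA φ t * (Real.exp z' - 1))
          = pA φ t + pA φ s * (Real.exp z' - 1) := by field_simp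
      rw [e] at h
      exact h.ne'
    have key : 1 + pA φ s / (1 + pA φ s / pA φ t * (Real.exp z' - 1)) /
        (pA φ t / Real.exp z') * (Real.exp z - 1)
        = (1 + pA φ s / pA φ t * (Real.exp (z + z') - 1)) /
          (1 + pA φ s / pA φ t * (Real.exp z' - 1)) := by
      rw [Real.exp_add]
      exact alg_key _ _ _ _ hAt.ne' hEz'.ne' hpos1
    rw [key, Real.log_div hN.ne' hDs.ne']
    ring
  refine ⟨h1, ?_, h3⟩
  intro z φ hφ s hs
  have h := h1 z (-z) φ hφ s hs
  rw [add_neg_cancel] at h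
  rw [h, h3 φ hφ s hs]
end

section
/- Let R denote the time-reversal operation on C([0,t];ℝ), R(φ)(s) := φ_{t−s} − φ_t for 0 ≤ s ≤ t. Then for every z ∈ ℝ one has R ∘ T_z = T_{−z} ∘ R as maps on C([0,t];ℝ). -/
open MeasureTheory ProbabilityTheory Set

/-- The time reversal `R(φ)(s) = φ_{t-s} - φ_t` on `C([0,t];ℝ)`. -/
noncomputable def pR (t : ℝ) (φ : ℝ → ℝ) (s : ℝ) : ℝ := φ (t - s) - φ t

/-- For every `z ∈ ℝ`, `R ∘ T_z = T_{-z} ∘ R` as maps on `C([0,t];ℝ)`. -/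
theorem pR_comp_pT (t : ℝ) (ht : 0 < t) (z : ℝ) (φ : ℝ → ℝ)
    (hφ : ContinuousOn φ (Icc 0 t)) :
    ∀ s ∈ Icc (0:ℝ) t, pR t (pT t z φ) s = pT t (-z) (pR t φ) s := by
  intro s hs
  obtain ⟨hs0, hst⟩ := hs
  set f : ℝ → ℝ := fun u => Real.exp (2 * φ u) with hf
  have hfc : ContinuousOn f (Icc 0 t) :=
    Real.continuous_exp.comp_continuousOn (continuousOn_const.mul hφ)
  have hInt : ∀ a b : ℝ, a ∈ Icc (0:ℝ) t → b ∈ Icc (0:ℝ) t →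
      IntervalIntegrable f MeasureTheory.volume a b := fun a b ha hb =>
    (hfc.mono (uIcc_subset_Icc ha hb)).intervalIntegrable
  have h0t : (0:ℝ) ∈ Icc (0:ℝ) t := ⟨le_rfl, ht.le⟩
  have htt : t ∈ Icc (0:ℝ) t := ⟨ht.le, le_rfl⟩
  -- splitting lemma
  have hsplit : ∀ r ∈ Icc (0:ℝ) t,
      pA φ r + ∫ u in r..t, f u = pA φ t := by
    intro r hr
    exact intervalIntegral.integral_add_adjacent_intervals (hInt 0 r h0t hr) (hInt r t hr htt)
  have hApos : 0 < pA φ t := by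
    apply intervalIntegral.intervalIntegral_pos_of_pos_on (hInt 0 t h0t htt)
      (fun x _ => Real.exp_pos _) ht
  -- reversal of pA
  have hArev : ∀ r ∈ Icc (0:ℝ) t,
      pA (pR t φ) r = Real.exp (-(2 * φ t)) * (pA φ t - pA φ (t - r)) := by
    intro r hr
    have htr : t - r ∈ Icc (0:ℝ) t := ⟨by linarith [hr.2], by linarith [hr.1]⟩
    have h1 : pA (pR t φ) r
        = ∫ u in (0:ℝ)..r, Real.exp (-(2 * φ t)) * f (t - u) := by
      unfold pA pR
      congr 1
      ext u
      rw [hf]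
      rw [← Real.exp_add]
      congr 1
      ring
    rw [h1, intervalIntegral.integral_const_mul]
    congr 1
    have h2 : (∫ u in (0:ℝ)..r, f (t - u)) = ∫ v in (t - r)..(t - 0), f v :=
      intervalIntegral.integral_comp_sub_left f t
    rw [h2, sub_zero]
    have := hsplit (t - r) htr
    linarith [this]
  have hts : t - s ∈ Icc (0:ℝ) t := ⟨by linarith, by linarith⟩
  have hAts0 : 0 ≤ pA φ (t - s) :=
    intervalIntegral.integral_nonneg hts.1 (fun u _ => (Real.exp_pos _).le)
  have hAtsle : pA φ (t - s) ≤ pA φ t := by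
    have h : (0:ℝ) ≤ ∫ u in (t - s)..t, f u :=
      intervalIntegral.integral_nonneg hts.2 (fun u _ => (Real.exp_pos _).le)
    linarith [hsplit (t - s) hts]
  set a : ℝ := pA φ (t - s) / pA φ t with ha
  have ha0 : 0 ≤ a := div_nonneg hAts0 hApos.le
  have ha1 : a ≤ 1 := (div_le_one hApos).mpr hAtsle
  have hpos : 0 < 1 + a * (Real.exp z - 1) := by
    have he := Real.exp_pos z
    rcases eq_or_lt_of_le ha0 with h | h
    · rw [← h]; norm_num
    · nlinarith [mul_pos h he]
  -- ratio for the reversed path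
  have hratio : pA (pR t φ) s / pA (pR t φ) t = 1 - a := by
    have hpA0 : pA φ 0 = 0 := intervalIntegral.integral_same
    rw [hArev s ⟨hs0, hst⟩, hArev t htt, sub_self, hpA0, sub_zero]
    rw [mul_div_mul_left _ _ (Real.exp_ne_zero _)]
    rw [sub_div, div_self hApos.ne', ha]
  -- now unfold everything
  have hAt : pA φ t / pA φ t = 1 := div_self hApos.ne'
  have hEE : Real.exp (-z) * Real.exp z = 1 := by
    rw [← Real.exp_add]; simp
  have hkey : 1 + (1 - a) * (Real.exp (-z) - 1)
      = Real.exp (-z) * (1 + a * (Real.exp z - 1)) := by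
    linear_combination (-a) * hEE
  have hL : pR t (pT t z φ) s = pT t z φ (t - s) - pT t z φ t := rfl
  have hpRs : pR t φ s = φ (t - s) - φ t := rfl
  have hR : pT t (-z) (pR t φ) s = pR t φ s
      - Real.log (1 + (pA (pR t φ) s / pA (pR t φ) t) * (Real.exp (-z) - 1)) := rfl
  rw [hL, hR, hratio, hpRs, pT, pT, hAt, hkey,
    Real.log_mul (Real.exp_ne_zero _) hpos.ne', Real.log_exp]
  rw [show (1:ℝ) + 1 * (Real.exp z - 1) = Real.exp z by ring, Real.log_exp, ← ha]
  ring
end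

section
/- Let D ⊂ ℝ × (0,∞) be a nonempty open set and h : D → ℝ a function such that for each ζ > 0 the function h(·,ζ) is injective on the cross-section D_ζ := {ξ ∈ ℝ : (ξ,ζ) ∈ D}; let Φ_h(D) := {(h(ξ,ζ),ζ) : (ξ,ζ) ∈ D} and let h^{-1}(·,ζ) denote the inverse of h(·,ζ). Then for any ψ ∈ C([0,t];ℝ) with (ψ_t, Z_t(ψ)) ∈ Φ_h(D), the path φ := T_{ψ_t − h^{-1}(ψ_t, Z_t(ψ))}(ψ) satisfies (φ_t, Z_t(φ)) ∈ D and T_{φ_t − h(φ_t, Z_t(φ))}(φ) = ψ. -/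
open MeasureTheory ProbabilityTheory Set

lemma pT_alg (a T e : ℝ) (hT : T ≠ 0) (he : e ≠ 0) (hM : 1 + a/T*(e-1) ≠ 0) :
    1 + (a / (1 + a/T*(e-1))) / (T / e) * (e⁻¹ - 1) = (1 + a/T*(e-1))⁻¹ := by
  have hM' : T + a*(e-1) ≠ 0 := by
    intro h0; apply hM
    field_simp
    linarith
  field_simp
  ring

lemma pT_key (t z : ℝ) (ht : 0 < t) (ψ : ℝ → ℝ) (hψ : Continuous ψ) :
    pT t z ψ t = ψ t - z ∧ pZ (pT t z ψ) t = pZ ψ t ∧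
      ∀ s ∈ Icc (0:ℝ) t, pT t (-z) (pT t z ψ) s = ψ s := by
  set f : ℝ → ℝ := fun u => Real.exp (2 * ψ u) with hfdef
  have hfc : Continuous f := (Real.continuous_exp).comp (continuous_const.mul hψ)
  have hfpos : ∀ u, 0 < f u := fun u => Real.exp_pos _
  have hAderiv : ∀ u, HasDerivAt (pA ψ) (f u) u := fun u =>
    (hfc.integral_hasStrictDerivAt 0 u).hasDerivAt
  have hAc : Continuous (pA ψ) :=
    continuous_iff_continuousAt.2 fun u => (hAderiv u).continuousAt
  have hAt : 0 < pA ψ t :=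
    intervalIntegral.intervalIntegral_pos_of_pos (hfc.intervalIntegrable 0 t) (fun u => hfpos u) ht
  have hAnn : ∀ s ∈ Icc (0:ℝ) t, 0 ≤ pA ψ s := fun s hs =>
    intervalIntegral.integral_nonneg hs.1 (fun u _ => (hfpos u).le)
  have hAle : ∀ s ∈ Icc (0:ℝ) t, pA ψ s ≤ pA ψ t := by
    intro s hs
    have h1 : pA ψ s + ∫ u in s..t, f u = pA ψ t :=
      intervalIntegral.integral_add_adjacent_intervals (hfc.intervalIntegrable 0 s)
        (hfc.intervalIntegrable s t)
    have h2 : 0 ≤ ∫ u in s..t, f u :=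
      intervalIntegral.integral_nonneg hs.2 (fun u _ => (hfpos u).le)
    linarith
  set c : ℝ := Real.exp z - 1 with hcdef
  have hc : -1 < c := by have := Real.exp_pos z; simp [hcdef]; linarith
  set d : ℝ → ℝ := fun u => 1 + (pA ψ u / pA ψ t) * c with hddef
  have hdpos : ∀ u ∈ Icc (0:ℝ) t, 0 < d u := by
    intro u hu
    have h1 : 0 ≤ pA ψ u / pA ψ t := div_nonneg (hAnn u hu) hAt.le
    have h2 : pA ψ u / pA ψ t ≤ 1 := (div_le_one hAt).2 (hAle u hu)
    simp only [hddef]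
    rcases eq_or_lt_of_le h1 with h0 | h0
    · rw [← h0]; norm_num
    · have hp : 0 < pA ψ u / pA ψ t * (1 + c) := mul_pos h0 (by linarith)
      nlinarith
  have hdt : d t = Real.exp z := by
    simp only [hddef, div_self hAt.ne', one_mul, hcdef]; ring
  have hdc : Continuous d := continuous_const.add ((hAc.div_const _).mul continuous_const)
  have hdderiv : ∀ u, HasDerivAt d (f u / pA ψ t * c) u := fun u =>
    (((hAderiv u).div_const (pA ψ t)).mul_const c).const_add 1
  have hTeq : ∀ s, pT t z ψ s = ψ s - Real.log (d s) := fun s => rfl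
  have hexp2 : ∀ u ∈ Icc (0:ℝ) t, Real.exp (2 * pT t z ψ u) = f u / (d u) ^ 2 := by
    intro u hu
    rw [hTeq, mul_sub, Real.exp_sub]
    have : Real.exp (2 * Real.log (d u)) = (d u) ^ 2 := by
      rw [mul_comm, Real.exp_mul, Real.exp_log (hdpos u hu)]
      norm_num
    rw [this]
  have hG : ∀ s ∈ Icc (0:ℝ) t, pA (pT t z ψ) s = pA ψ s / d s := by
    intro s hs
    have hsub : uIcc (0:ℝ) s ⊆ Icc (0:ℝ) t := by
      rw [uIcc_of_le hs.1]; exact Icc_subset_Icc le_rfl hs.2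
    have hcong : pA (pT t z ψ) s = ∫ u in (0:ℝ)..s, f u / (d u) ^ 2 := by
      refine intervalIntegral.integral_congr fun u hu => ?_
      exact hexp2 u (hsub hu)
    have hcontOn : ContinuousOn (fun u => f u / (d u) ^ 2) (uIcc (0:ℝ) s) :=
      hfc.continuousOn.div (hdc.pow 2).continuousOn
        (fun u hu => pow_ne_zero 2 (hdpos u (hsub hu)).ne')
    have hderivG : ∀ u ∈ uIcc (0:ℝ) s,
        HasDerivAt (fun v => pA ψ v / d v) (f u / (d u) ^ 2) u := by
      intro u hu
      have h := (hAderiv u).div (hdderiv u) (hdpos u (hsub hu)).ne'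
      have hnum : f u * d u - pA ψ u * (f u / pA ψ t * c) = f u := by
        have hdu : d u = 1 + (pA ψ u / pA ψ t) * c := rfl
        rw [hdu]
        field_simp
        ring
      rw [← hnum]
      exact h
    have := intervalIntegral.integral_eq_sub_of_hasDerivAt hderivG
      (hcontOn.intervalIntegrable)
    rw [hcong, this]
    have hA0 : pA ψ 0 = 0 := intervalIntegral.integral_same
    rw [hA0]
    simp
  have htmem : t ∈ Icc (0:ℝ) t := ⟨ht.le, le_rfl⟩
  have hAφt : pA (pT t z ψ) t = pA ψ t / Real.exp z := by rw [hG t htmem, hdt]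
  have h1 : pT t z ψ t = ψ t - z := by
    rw [hTeq, hdt, Real.log_exp]
  refine ⟨h1, ?_, ?_⟩
  · rw [pZ, pZ, hAφt, h1]
    rw [neg_sub, Real.exp_sub, Real.exp_neg]
    field_simp
  · intro s hs
    have hinner : 1 + (pA (pT t z ψ) s / pA (pT t z ψ) t) * (Real.exp (-z) - 1)
        = (d s)⁻¹ := by
      have hds : d s = 1 + (pA ψ s / pA ψ t) * c := rfl
      have hdsne : (1 + pA ψ s / pA ψ t * (Real.exp z - 1)) ≠ 0 := by
        have := (hdpos s hs).ne'
        rw [hds, hcdef] at this; exact this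
      have hez : Real.exp z ≠ 0 := (Real.exp_pos z).ne'
      rw [hG s hs, hAφt, Real.exp_neg, hds, hcdef]
      exact pT_alg _ _ _ hAt.ne' hez hdsne
    rw [pT, hinner, Real.log_inv, hTeq]
    ring

/-- Let `D ⊆ ℝ × (0,∞)` be a nonempty open set and `h` a function which, for each `ζ > 0`,
is injective in its first variable on the cross-section `D_ζ`; let `hinv` be its inverse in
the first variable and `Φ_h(D) = {(h(ξ,ζ),ζ) : (ξ,ζ) ∈ D}`.  For any `ψ ∈ C([0,t];ℝ)` with
`(ψ_t, Z_t(ψ)) ∈ Φ_h(D)`, the path `φ := T_{ψ_t - h⁻¹(ψ_t,Z_t(ψ))}(ψ)` satisfies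
`(φ_t, Z_t(φ)) ∈ D` and `T_{φ_t - h(φ_t,Z_t(φ))}(φ) = ψ`. -/
theorem pT_inverse_pair (t : ℝ) (ht : 0 < t)
    (D : Set (ℝ × ℝ)) (hDsub : D ⊆ univ ×ˢ Ioi (0:ℝ)) (hDopen : IsOpen D)
    (hDne : D.Nonempty)
    (h : ℝ × ℝ → ℝ)
    (hinj : ∀ ζ : ℝ, 0 < ζ → InjOn (fun ξ => h (ξ, ζ)) {ξ : ℝ | (ξ, ζ) ∈ D})
    (hinv : ℝ × ℝ → ℝ)
    (hhinv : ∀ p ∈ D, hinv (h p, p.2) = p.1)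
    (ψ : ℝ → ℝ) (hψ : ContinuousOn ψ (Icc 0 t))
    (hmem : (ψ t, pZ ψ t) ∈ (fun p : ℝ × ℝ => (h p, p.2)) '' D) :
    ((pT t (ψ t - hinv (ψ t, pZ ψ t)) ψ t,
        pZ (pT t (ψ t - hinv (ψ t, pZ ψ t)) ψ) t) ∈ D) ∧
      (∀ s ∈ Icc (0:ℝ) t,
        pT t
          (pT t (ψ t - hinv (ψ t, pZ ψ t)) ψ t -
            h (pT t (ψ t - hinv (ψ t, pZ ψ t)) ψ t,
               pZ (pT t (ψ t - hinv (ψ t, pZ ψ t)) ψ) t))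
          (pT t (ψ t - hinv (ψ t, pZ ψ t)) ψ) s = ψ s) := by
  -- Extend ψ continuously to all of ℝ
  set ψ' : ℝ → ℝ := fun u => ψ (max 0 (min u t)) with hψ'def
  have hmemIcc : ∀ u : ℝ, max 0 (min u t) ∈ Icc (0:ℝ) t :=
    fun u => ⟨le_max_left _ _, max_le ht.le (min_le_right _ _)⟩
  have hψ'c : Continuous ψ' :=
    hψ.comp_continuous (continuous_const.max (continuous_id.min continuous_const)) hmemIcc
  have heq : ∀ s ∈ Icc (0:ℝ) t, ψ' s = ψ s := by
    intro s hs
    simp only [hψ'def, min_eq_left hs.2, max_eq_right hs.1]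
  have htmem : t ∈ Icc (0:ℝ) t := ⟨ht.le, le_rfl⟩
  have hsubIcc : ∀ s ∈ Icc (0:ℝ) t, uIcc (0:ℝ) s ⊆ Icc (0:ℝ) t := by
    intro s hs
    rw [uIcc_of_le hs.1]
    exact Icc_subset_Icc le_rfl hs.2
  have hAeq : ∀ s ∈ Icc (0:ℝ) t, pA ψ s = pA ψ' s := by
    intro s hs
    exact intervalIntegral.integral_congr fun u hu => by rw [heq u (hsubIcc s hs hu)]
  have hTeq : ∀ z : ℝ, ∀ s ∈ Icc (0:ℝ) t, pT t z ψ s = pT t z ψ' s := by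
    intro z s hs
    rw [pT, pT, hAeq s hs, hAeq t htmem, heq s hs]
  have hATeq : ∀ z : ℝ, ∀ s ∈ Icc (0:ℝ) t, pA (pT t z ψ) s = pA (pT t z ψ') s := by
    intro z s hs
    exact intervalIntegral.integral_congr fun u hu => by rw [hTeq z u (hsubIcc s hs hu)]
  have hZeq : pZ ψ t = pZ ψ' t := by rw [pZ, pZ, heq t htmem, hAeq t htmem]
  have hZTeq : ∀ z : ℝ, pZ (pT t z ψ) t = pZ (pT t z ψ') t := by
    intro z
    rw [pZ, pZ, hTeq z t htmem, hATeq z t htmem]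
  -- unpack the image membership
  obtain ⟨p, hpD, hpe⟩ := hmem
  have hh : h p = ψ t := congrArg Prod.fst hpe
  have hp2 : p.2 = pZ ψ t := congrArg Prod.snd hpe
  have hinveq : hinv (ψ t, pZ ψ t) = p.1 := by
    rw [← hh, ← hp2]; exact hhinv p hpD
  rw [hinveq]
  set z : ℝ := ψ t - p.1 with hzdef
  obtain ⟨K1, K2, K3⟩ := pT_key t z ht ψ' hψ'c
  have hφt : pT t z ψ t = p.1 := by
    rw [hTeq z t htmem, K1, heq t htmem, hzdef]; ring
  have hZφ : pZ (pT t z ψ) t = p.2 := by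
    rw [hZTeq z, K2, ← hZeq, hp2]
  have hinv2 : ∀ s ∈ Icc (0:ℝ) t, pT t (-z) (pT t z ψ) s = ψ s := by
    intro s hs
    have hcast : pT t (-z) (pT t z ψ) s = pT t (-z) (pT t z ψ') s := by
      show pT t z ψ s -
            Real.log (1 + pA (pT t z ψ) s / pA (pT t z ψ) t * (Real.exp (-z) - 1)) =
          pT t z ψ' s -
            Real.log (1 + pA (pT t z ψ') s / pA (pT t z ψ') t * (Real.exp (-z) - 1))
      rw [hATeq z s hs, hATeq z t htmem, hTeq z s hs]
    rw [hcast, K3 s hs, heq s hs]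
  refine ⟨?_, ?_⟩
  · rw [hφt, hZφ]
    simpa using hpD
  · intro s hs
    rw [hφt, hZφ]
    have hneg : p.1 - h (p.1, p.2) = -z := by
      rw [Prod.mk.eta, hh, hzdef]; ring
    rw [hneg]
    exact hinv2 s hs
end
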